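/- There exists C > 0 such that for all z₁, z₂ in the hyperbolic upper half-plane ℍ, the set {i ∈ ℤ : d(z₁, z₂ + 2πi) < 2} is finite and its cardinality is at most C · ((Im z₁ + 1)(Im z₂ + 1))^{1/2}. -/

import Mathlib

open UpperHalfPlane

-- counting integers in a real interval
lemma count_int_Ioo (a b : ℝ) (hab : a ≤ b) :
    {i : ℤ | a < (i : ℝ) ∧ (i : ℝ) < b}.Finite ∧
    ({i : ℤ | a < (i : ℝ) ∧ (i : ℝ) < b}.ncard : ℝ) ≤ b - a + 1 := by
  have hsub : {i : ℤ | a < (i : ℝ) ∧ (i : ℝ) < b} ⊆ (Finset.Icc ⌈a⌉ ⌊b⌋ : Set ℤ) := by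
    intro i hi
    simp only [Finset.coe_Icc, Set.mem_Icc]
    exact ⟨Int.ceil_le.mpr hi.1.le, Int.le_floor.mpr hi.2.le⟩
  have hfin : {i : ℤ | a < (i : ℝ) ∧ (i : ℝ) < b}.Finite :=
    Set.Finite.subset (Finset.Icc ⌈a⌉ ⌊b⌋).finite_toSet hsub
  refine ⟨hfin, ?_⟩
  have h1 : {i : ℤ | a < (i : ℝ) ∧ (i : ℝ) < b}.ncard ≤ (Finset.Icc ⌈a⌉ ⌊b⌋).card := by
    rw [← Set.ncard_coe_finset]
    exact Set.ncard_le_ncard hsub (Finset.Icc ⌈a⌉ ⌊b⌋).finite_toSet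
  have h2 : (Finset.Icc ⌈a⌉ ⌊b⌋).card = (⌊b⌋ + 1 - ⌈a⌉).toNat := Int.card_Icc _ _
  have h3 : ((⌊b⌋ + 1 - ⌈a⌉).toNat : ℝ) ≤ b - a + 1 := by
    have hb : (⌊b⌋ : ℝ) ≤ b := Int.floor_le b
    have ha : a ≤ (⌈a⌉ : ℝ) := Int.le_ceil a
    rcases le_or_gt (⌊b⌋ + 1 - ⌈a⌉) 0 with h | h
    · rw [Int.toNat_of_nonpos h]
      push_cast
      linarith
    · have he : ((⌊b⌋ + 1 - ⌈a⌉).toNat : ℝ) = (⌊b⌋ : ℝ) + 1 - ⌈a⌉ := by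
        rw [show ((⌊b⌋ + 1 - ⌈a⌉).toNat : ℝ) = (((⌊b⌋ + 1 - ⌈a⌉).toNat : ℤ) : ℝ) by push_cast; ring,
          Int.toNat_of_nonneg h.le]
        push_cast; ring
      rw [he]; linarith
  calc ({i : ℤ | a < (i : ℝ) ∧ (i : ℝ) < b}.ncard : ℝ)
      ≤ ((⌊b⌋ + 1 - ⌈a⌉).toNat : ℝ) := by exact_mod_cast h2 ▸ h1
    _ ≤ b - a + 1 := h3

/-- There exists `C > 0` such that for all `z₁, z₂` in the hyperbolic
upper half-plane `ℍ`, the set `{i ∈ ℤ : d(z₁, z₂ + 2πi) < 2}` is finite and its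
cardinality is at most `C · ((Im z₁ + 1)(Im z₂ + 1))^{1/2}`. -/
theorem card_close_deck_translates_le :
    ∃ C > (0 : ℝ), ∀ z₁ z₂ : UpperHalfPlane,
      {i : ℤ | dist z₁ ((2 * Real.pi * (i : ℝ)) +ᵥ z₂) < 2}.Finite ∧
      ({i : ℤ | dist z₁ ((2 * Real.pi * (i : ℝ)) +ᵥ z₂) < 2}.ncard : ℝ) ≤
        C * Real.sqrt ((z₁.im + 1) * (z₂.im + 1)) := by
  have hpi := Real.pi_pos
  have hsinh : (0:ℝ) < Real.sinh 1 := Real.sinh_pos_iff.mpr one_pos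
  refine ⟨2 * Real.sinh 1 / Real.pi + 1, by positivity, fun z₁ z₂ => ?_⟩
  set y₁ := z₁.im with hy₁
  set y₂ := z₂.im with hy₂
  have hy₁0 : 0 < y₁ := z₁.im_pos
  have hy₂0 : 0 < y₂ := z₂.im_pos
  set B : ℝ := 2 * Real.sinh 1 * Real.sqrt (y₁ * y₂) with hB
  have hB0 : 0 < B := by positivity
  set a : ℝ := ((z₁ : ℂ).re - (z₂ : ℂ).re - B) / (2 * Real.pi) with ha
  set b : ℝ := ((z₁ : ℂ).re - (z₂ : ℂ).re + B) / (2 * Real.pi) with hb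
  have hab : a ≤ b := by
    apply div_le_div_of_nonneg_right ?_ (by positivity)
    linarith
  -- key subset
  have hsub : {i : ℤ | dist z₁ ((2 * Real.pi * (i : ℝ)) +ᵥ z₂) < 2} ⊆
      {i : ℤ | a < (i : ℝ) ∧ (i : ℝ) < b} := by
    intro i hi
    simp only [Set.mem_setOf_eq] at hi ⊢
    -- from the hyperbolic distance bound get a Euclidean bound
    have him : ((2 * Real.pi * (i : ℝ)) +ᵥ z₂).im = y₂ := vadd_im _ _
    have hkey : dist (z₁ : ℂ) (((2 * Real.pi * (i : ℝ)) +ᵥ z₂ : ℍ) : ℂ) < B := by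
      have h1 : Real.sinh (dist z₁ ((2 * Real.pi * (i : ℝ)) +ᵥ z₂) / 2)
          = dist (z₁ : ℂ) (((2 * Real.pi * (i : ℝ)) +ᵥ z₂ : ℍ) : ℂ)
            / (2 * Real.sqrt (y₁ * y₂)) := by
        rw [sinh_half_dist, him]
      have h2 : Real.sinh (dist z₁ ((2 * Real.pi * (i : ℝ)) +ᵥ z₂) / 2) < Real.sinh 1 := by
        apply Real.sinh_lt_sinh.mpr
        linarith
      rw [h1] at h2
      have hden : (0:ℝ) < 2 * Real.sqrt (y₁ * y₂) := by positivity
      rw [div_lt_iff₀ hden] at h2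
      calc dist (z₁ : ℂ) (((2 * Real.pi * (i : ℝ)) +ᵥ z₂ : ℍ) : ℂ)
          < Real.sinh 1 * (2 * Real.sqrt (y₁ * y₂)) := h2
        _ = B := by ring
    -- real part bound
    have hre : |(z₁ : ℂ).re - ((z₂ : ℂ).re + 2 * Real.pi * (i : ℝ))| < B := by
      have hco : (((2 * Real.pi * (i : ℝ)) +ᵥ z₂ : ℍ) : ℂ)
          = (2 * Real.pi * (i : ℝ) : ℝ) + (z₂ : ℂ) := coe_vadd _ _
      have : |((z₁ : ℂ) - (((2 * Real.pi * (i : ℝ)) +ᵥ z₂ : ℍ) : ℂ)).re|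
          ≤ ‖(z₁ : ℂ) - (((2 * Real.pi * (i : ℝ)) +ᵥ z₂ : ℍ) : ℂ)‖ :=
        Complex.abs_re_le_norm _
      rw [Complex.dist_eq] at hkey
      have h4 := lt_of_le_of_lt this hkey
      rw [hco] at h4
      have he : ((z₁ : ℂ) - ((2 * Real.pi * (i : ℝ) : ℝ) + (z₂ : ℂ))).re
          = (z₁ : ℂ).re - ((z₂ : ℂ).re + 2 * Real.pi * (i : ℝ)) := by
        simp [Complex.sub_re, Complex.add_re]; ring
      rw [he] at h4
      exact h4
    rw [abs_lt] at hre
    constructor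
    · rw [ha, div_lt_iff₀ (by positivity)]
      nlinarith [hre.2]
    · rw [hb, lt_div_iff₀ (by positivity)]
      nlinarith [hre.1]
  obtain ⟨hfinT, hcardT⟩ := count_int_Ioo a b hab
  have hfin := hfinT.subset hsub
  refine ⟨hfin, ?_⟩
  have hcard : ({i : ℤ | dist z₁ ((2 * Real.pi * (i : ℝ)) +ᵥ z₂) < 2}.ncard : ℝ)
      ≤ ({i : ℤ | a < (i : ℝ) ∧ (i : ℝ) < b}.ncard : ℝ) := by
    exact_mod_cast Set.ncard_le_ncard hsub hfinT
  have hba : b - a + 1 = B / Real.pi + 1 := by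
    rw [ha, hb]
    field_simp
    ring
  -- final estimate
  have hsqrt1 : (1:ℝ) ≤ Real.sqrt ((y₁ + 1) * (y₂ + 1)) := by
    have h1 : (1:ℝ) ≤ (y₁ + 1) * (y₂ + 1) := by nlinarith
    calc (1:ℝ) = Real.sqrt 1 := Real.sqrt_one.symm
      _ ≤ Real.sqrt ((y₁ + 1) * (y₂ + 1)) := Real.sqrt_le_sqrt h1
  have hsqrt2 : Real.sqrt (y₁ * y₂) ≤ Real.sqrt ((y₁ + 1) * (y₂ + 1)) := by
    apply Real.sqrt_le_sqrt
    nlinarith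
  calc ({i : ℤ | dist z₁ ((2 * Real.pi * (i : ℝ)) +ᵥ z₂) < 2}.ncard : ℝ)
      ≤ b - a + 1 := le_trans hcard hcardT
    _ = 2 * Real.sinh 1 / Real.pi * Real.sqrt (y₁ * y₂) + 1 := by
        rw [hba, hB]; ring
    _ ≤ 2 * Real.sinh 1 / Real.pi * Real.sqrt ((y₁ + 1) * (y₂ + 1))
        + 1 * Real.sqrt ((y₁ + 1) * (y₂ + 1)) := by
        have t1 := mul_le_mul_of_nonneg_left hsqrt2 (by positivity :
          (0:ℝ) ≤ 2 * Real.sinh 1 / Real.pi)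
        have t2 : (1:ℝ) ≤ 1 * Real.sqrt ((y₁ + 1) * (y₂ + 1)) := by
          rw [one_mul]; exact hsqrt1
        linarith
    _ = (2 * Real.sinh 1 / Real.pi + 1) * Real.sqrt ((y₁ + 1) * (y₂ + 1)) := by ring
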